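/- Distinct-token self-division is one-way only: for distinct tokens t₁ ≠ t₂, rationals 0 < lo < hi, and dimension tag d, OneWayOnly (Div (Meas t₁ lo hi d) (Meas t₂ lo hi d)) (Exact 1 d) holds. -/
import Mathlib


abbrev Token := ℕ

inductive Dim where
  | base
deriving DecidableEq

inductive Expr where
  | Exact (q : ℚ) (d : Dim)
  | Meas (t : Token) (lo hi : ℚ) (d : Dim)
  | Add (a b : Expr)
  | Sub (a b : Expr)
  | Mul (a b : Expr)
  | Div (a b : Expr)
  | Neg (a : Expr)

abbrev TokenEnv := Token → ℚ

def TokenConsistent (σ : TokenEnv) : Expr → Prop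
  | .Exact _ _ => True
  | .Meas t lo hi _ => lo ≤ σ t ∧ σ t ≤ hi
  | .Add a b => TokenConsistent σ a ∧ TokenConsistent σ b
  | .Sub a b => TokenConsistent σ a ∧ TokenConsistent σ b
  | .Mul a b => TokenConsistent σ a ∧ TokenConsistent σ b
  | .Div a b => TokenConsistent σ a ∧ TokenConsistent σ b
  | .Neg a => TokenConsistent σ a

def eval (σ : TokenEnv) : Expr → ℚ
  | .Exact q _ => q
  | .Meas t _ _ _ => σ t
  | .Add a b => eval σ a + eval σ b
  | .Sub a b => eval σ a - eval σ b
  | .Mul a b => eval σ a * eval σ b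
  | .Div a b => eval σ a / eval σ b
  | .Neg a => - eval σ a

def Encl (e : Expr) : Set ℚ := {v : ℚ | ∃ σ : TokenEnv, TokenConsistent σ e ∧ eval σ e = v}

def RewritesTo (e e' : Expr) : Prop := Encl e' ⊆ Encl e

def Interchangeable (e e' : Expr) : Prop := Encl e = Encl e'

def OneWayOnly (e e' : Expr) : Prop := RewritesTo e e' ∧ ¬ RewritesTo e' e

theorem distinct_token_division_one_way_only_to_exact_one_positive
    (t₁ t₂ : Token) (hne : t₁ ≠ t₂) (lo hi : ℚ) (hpos : 0 < lo) (hlt : lo < hi) (d : Dim) :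
    OneWayOnly (.Div (.Meas t₁ lo hi d) (.Meas t₂ lo hi d)) (.Exact 1 d) := by
  constructor
  · intro v hv
    obtain ⟨σ, _, hev⟩ := hv
    refine ⟨fun _ => lo, ?_, ?_⟩
    · exact ⟨⟨le_refl _, hlt.le⟩, ⟨le_refl _, hlt.le⟩⟩
    · simp [eval] at hev ⊢
      rw [div_self hpos.ne']
      exact hev
  · intro h
    have : (lo / hi : ℚ) ∈ Encl (.Exact 1 d) := by
      apply h
      refine ⟨fun t => if t = t₁ then lo else hi, ?_, ?_⟩
      · simp [TokenConsistent, hne, Ne.symm hne, le_refl, hlt.le]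
      · simp [eval, hne, Ne.symm hne]
    obtain ⟨σ, _, hev⟩ := this
    simp [eval] at hev
    have : lo / hi < 1 := (div_lt_one (hpos.trans hlt)).mpr hlt
    rw [hev] at this
    exact lt_irrefl _ this
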